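/- Let G = V^t ⋊ H with V a faithful irreducible H-module, and let K = W₁X and M = W₂H^{v₂}, where W₁ ≤ W₂ are H-submodules of V^t with W₂ maximal, X ≤ H^{v₁}, and v₁, v₂ ∈ V^t. Then there exists u ∈ V^t such that K ∩ M = W₁·C_X(u), where C_X(u) is the centralizer of u in X. -/

import Mathlib

namespace PaperSDP

variable {V H : Type*} [AddCommGroup V] [Group H] [DistribMulAction H V] {t : ℕ}

/-- The diagonal action of `H` on `V^t`, as a homomorphism into the
(multiplicatively written) automorphism group of `V^t`. -/
def phi (V : Type*) [AddCommGroup V] (H : Type*) [Group H] [DistribMulAction H V]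
    (t : ℕ) : H →* MulAut (Multiplicative (Fin t → V)) where
  toFun h := AddEquiv.toMultiplicative (DistribMulAction.toAddAut H (Fin t → V) h)
  map_one' := by ext v; simp
  map_mul' h₁ h₂ := by ext v; simp [mul_smul]

/-- The semidirect product `G = V^t ⋊ H` with diagonal action. -/
abbrev SDP (V : Type*) [AddCommGroup V] (H : Type*) [Group H] [DistribMulAction H V]
    (t : ℕ) : Type _ :=
  (Multiplicative (Fin t → V)) ⋊[phi V H t] H

/-- The copy of `V^t` inside `G`. -/
def VtG (V : Type*) [AddCommGroup V] (H : Type*) [Group H] [DistribMulAction H V]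
    (t : ℕ) : Subgroup (SDP V H t) :=
  (SemidirectProduct.inl : Multiplicative (Fin t → V) →* SDP V H t).range

/-- The image in `G` of an additive subgroup `W` of `V^t`. -/
def subG (W : AddSubgroup (Fin t → V)) : Subgroup (SDP V H t) :=
  (AddSubgroup.toSubgroup W).map
    (SemidirectProduct.inl : Multiplicative (Fin t → V) →* SDP V H t)

/-- The element of `G` corresponding to `v ∈ V^t`. -/
def elemG (v : Fin t → V) : SDP V H t :=
  SemidirectProduct.inl (Multiplicative.ofAdd v)

/-- The conjugate `K^v = v⁻¹ K v` of a subgroup `K ≤ G` by an element `v ∈ V^t`. -/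
def conjG (K : Subgroup (SDP V H t)) (v : Fin t → V) : Subgroup (SDP V H t) :=
  K.map (MulAut.conj (elemG v)⁻¹).toMonoidHom

/-- The copy `H^v` of `H` in `G`, conjugated by `v ∈ V^t`. -/
def HG (V : Type*) [AddCommGroup V] (H : Type*) [Group H] [DistribMulAction H V]
    (t : ℕ) (v : Fin t → V) : Subgroup (SDP V H t) :=
  conjG (SemidirectProduct.inr : H →* SDP V H t).range v

/-- `W` is an `H`-submodule of `V^t` (an `H`-invariant additive subgroup). -/
def IsHSub (H : Type*) [Group H] [DistribMulAction H V]
    (W : AddSubgroup (Fin t → V)) : Prop :=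
  ∀ (h : H) (w : Fin t → V), w ∈ W → h • w ∈ W

/-- `W` is a maximal `H`-submodule of `V^t`. -/
def IsMaxHSub (H : Type*) [Group H] [DistribMulAction H V]
    (W : AddSubgroup (Fin t → V)) : Prop :=
  IsHSub H W ∧ W ≠ ⊤ ∧ ∀ W' : AddSubgroup (Fin t → V), IsHSub H W' → W < W' → W' = ⊤

/-- The action of `H` on `V` is (faithful and) irreducible. -/
def IsIrreducible (H : Type*) [Group H] (V : Type*) [AddCommGroup V]
    [DistribMulAction H V] : Prop :=
  (⊥ : AddSubgroup V) ≠ ⊤ ∧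
    ∀ W : AddSubgroup V, (∀ (h : H) (w : V), w ∈ W → h • w ∈ W) → W = ⊥ ∨ W = ⊤

/-- The action of `H` on `V` is faithful. -/
def IsFaithful (H : Type*) [Group H] (V : Type*) [AddCommGroup V]
    [DistribMulAction H V] : Prop :=
  ∀ h : H, (∀ v : V, h • v = v) → h = 1

/-- An `End_H(V)`-subspace of `V`: an additive subgroup stable under all
`H`-equivariant additive endomorphisms of `V`. -/
def IsFSub (H : Type*) [Group H] (V : Type*) [AddCommGroup V] [DistribMulAction H V]
    (Z : AddSubgroup V) : Prop :=
  ∀ f : V →+ V, (∀ (h : H) (v : V), f (h • v) = h • f v) → ∀ z ∈ Z, f z ∈ Z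

/-- The centralizer `C_{H*}(Z)` of a subset `Z ⊆ V` (embedded diagonally in `V^t`)
in the conjugate `H* = H^g` of `H`, inside `G`. -/
def CHstar (g : SDP V H t) (Z : AddSubgroup V) : Subgroup (SDP V H t) :=
  ((SemidirectProduct.inr : H →* SDP V H t).range.map (MulAut.conj g).toMonoidHom) ⊓
    Subgroup.centralizer ((fun z : V => elemG (H := H) (fun _ : Fin t => z)) '' Z)

end PaperSDP

namespace PaperAux

variable {V H : Type*} [AddCommGroup V] [Group H] [DistribMulAction H V] {t : ℕ}

/-- Existence of an H-equivariant additive hom `V^t →+ V` with kernel exactly `W₂`. -/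
theorem exists_equivariant_hom
    (hirr : ∀ W : AddSubgroup V, (∀ (h : H) (w : V), w ∈ W → h • w ∈ W) → W = ⊥ ∨ W = ⊤)
    (W₂ : AddSubgroup (Fin t → V))
    (hHsub : ∀ (h : H) (w : Fin t → V), w ∈ W₂ → h • w ∈ W₂)
    (hne : W₂ ≠ ⊤)
    (hmax : ∀ W' : AddSubgroup (Fin t → V),
      (∀ (h : H) (w : Fin t → V), w ∈ W' → h • w ∈ W') → W₂ < W' → W' = ⊤) :
    ∃ f : (Fin t → V) →+ V, (∀ (h : H) (x : Fin t → V), f (h • x) = h • f x) ∧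
      ∀ x : Fin t → V, f x = 0 ↔ x ∈ W₂ := by
  classical
  -- pick a coordinate whose copy of V is not inside W₂
  have hi : ∃ i : Fin t, ∃ v : V, Pi.single i v ∉ W₂ := by
    by_contra hcon
    push_neg at hcon
    apply hne
    ext x
    simp only [AddSubgroup.mem_top, iff_true]
    have : x = ∑ i : Fin t, Pi.single i (x i) := by
      rw [Finset.univ_sum_single]
    rw [this]
    exact AddSubgroup.sum_mem _ fun i _ => hcon i (x i)
  obtain ⟨i, v₀, hv₀⟩ := hi
  -- the quotient
  let q : (Fin t → V) →+ (Fin t → V) ⧸ W₂ := QuotientAddGroup.mk' W₂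
  let s : V →+ (Fin t → V) :=
    { toFun := fun v => Pi.single i v
      map_zero' := Pi.single_zero i
      map_add' := fun a b => by simp [Pi.single_add] }
  let g : V →+ (Fin t → V) ⧸ W₂ := q.comp s
  have hsingle_smul : ∀ (h : H) (v : V), (Pi.single i (h • v) : Fin t → V) = h • (Pi.single i v : Fin t → V) := by
    intro h v
    funext j
    by_cases hj : j = i
    · subst hj; simp
    · simp [Pi.single_eq_of_ne hj, smul_zero]
  have hqzero : ∀ x : Fin t → V, q x = 0 ↔ x ∈ W₂ := by
    intro x
    exact QuotientAddGroup.eq_zero_iff x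
  -- g is injective
  have hginj : Function.Injective g := by
    set K : AddSubgroup V :=
      { carrier := {v : V | Pi.single i v ∈ W₂}
        zero_mem' := by simp only [Set.mem_setOf_eq, Pi.single_zero]; exact W₂.zero_mem
        add_mem' := by
          intro a b ha hb
          simp only [Set.mem_setOf_eq] at *
          rw [Pi.single_add]
          exact W₂.add_mem ha hb
        neg_mem' := by
          intro a ha
          simp only [Set.mem_setOf_eq] at *
          rw [Pi.single_neg]
          exact W₂.neg_mem ha } with hK
    have hKH : ∀ (h : H) (w : V), w ∈ K → h • w ∈ K := by
      intro h w hw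
      show Pi.single i (h • w) ∈ W₂
      rw [hsingle_smul]
      exact hHsub h _ hw
    rcases hirr K hKH with hbot | htop
    · rw [injective_iff_map_eq_zero]
      intro a ha
      have : a ∈ K := (hqzero (Pi.single i a)).mp ha
      rw [hbot] at this
      exact this
    · exact absurd (htop ▸ AddSubgroup.mem_top v₀ : v₀ ∈ K) hv₀
  -- g is surjective
  have hgsurj : Function.Surjective g := by
    have hWtop : W₂ ⊔ s.range = ⊤ := by
      apply hmax
      · intro h w hw
        rw [AddSubgroup.mem_sup] at hw ⊢
        obtain ⟨y, hy, z, hz, hyz⟩ := hw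
        obtain ⟨v, hv⟩ := hz
        refine ⟨h • y, hHsub h y hy, Pi.single i (h • v), ⟨h • v, rfl⟩, ?_⟩
        rw [hsingle_smul]
        have : (Pi.single i v : Fin t → V) = z := hv
        rw [← hyz, ← this, ← smul_add]
      · have hmem : (Pi.single i v₀ : Fin t → V) ∈ W₂ ⊔ s.range :=
          AddSubgroup.mem_sup_right ⟨v₀, rfl⟩
        exact lt_of_le_of_ne le_sup_left (fun hEq => hv₀ (by rw [hEq]; exact hmem))
    intro x
    obtain ⟨y, rfl⟩ := QuotientAddGroup.mk'_surjective W₂ x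
    have : y ∈ W₂ ⊔ s.range := hWtop ▸ AddSubgroup.mem_top y
    rw [AddSubgroup.mem_sup] at this
    obtain ⟨w, hw, z, ⟨v, rfl⟩, hwz⟩ := this
    refine ⟨v, ?_⟩
    show q (s v) = q y
    rw [← hwz, map_add]
    rw [(hqzero w).mpr hw, zero_add]
  let e : V ≃+ ((Fin t → V) ⧸ W₂) := AddEquiv.ofBijective g ⟨hginj, hgsurj⟩
  have he_apply : ∀ v : V, e v = q (Pi.single i v) := fun v => rfl
  refine ⟨(e.symm : ((Fin t → V) ⧸ W₂) ≃+ V).toAddMonoidHom.comp q, ?_, ?_⟩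
  · intro h x
    apply e.injective
    show e (e.symm (q (h • x))) = e (h • (e.symm (q x)))
    rw [e.apply_symm_apply]
    set y : V := e.symm (q x) with hy
    have hey : q (Pi.single i y) = q x := by
      rw [← he_apply, hy, e.apply_symm_apply]
    have hdiff : Pi.single i y - x ∈ W₂ := by
      rw [← hqzero, map_sub, hey, sub_self]
    have hdiff2 : Pi.single i (h • y) - h • x ∈ W₂ := by
      have := hHsub h _ hdiff
      rwa [smul_sub, ← hsingle_smul] at this
    rw [he_apply]
    symm
    rw [← sub_eq_zero, ← map_sub, hqzero]
    exact hdiff2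
  · intro x
    show e.symm (q x) = 0 ↔ x ∈ W₂
    rw [← hqzero x]
    constructor
    · intro hx
      have : e (e.symm (q x)) = e 0 := by rw [hx]
      rwa [e.apply_symm_apply, map_zero] at this
    · intro hx
      rw [hx, map_zero]

end PaperAux

namespace PaperAux2

open PaperSDP SemidirectProduct

variable {V H : Type*} [AddCommGroup V] [Group H] [DistribMulAction H V] {t : ℕ}

lemma phi_toAdd (h : H) (n : Multiplicative (Fin t → V)) :
    Multiplicative.toAdd (phi V H t h n) = h • Multiplicative.toAdd n := rfl

lemma mem_subG {W : AddSubgroup (Fin t → V)} {g : SDP V H t} :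
    g ∈ subG W ↔ g.right = 1 ∧ Multiplicative.toAdd g.left ∈ W := by
  rw [subG, Subgroup.mem_map]
  constructor
  · rintro ⟨x, hx, rfl⟩
    exact ⟨rfl, hx⟩
  · rintro ⟨h1, h2⟩
    refine ⟨g.left, h2, ?_⟩
    exact SemidirectProduct.ext rfl h1.symm

lemma mem_HG {v : Fin t → V} {g : SDP V H t} :
    g ∈ HG V H t v ↔ Multiplicative.toAdd g.left = g.right • v - v := by
  rw [HG, conjG, Subgroup.mem_map]
  constructor
  · rintro ⟨x, ⟨h, rfl⟩, rfl⟩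
    simp only [MulEquiv.coe_toMonoidHom, MulAut.conj_apply, inv_inv]
    simp only [toAdd_mul, mul_left, mul_right, inv_left, inv_right, left_inl, right_inl,
      left_inr, right_inr, phi_toAdd, elemG, toAdd_mul, toAdd_inv, toAdd_ofAdd,
      one_mul, mul_one, inv_one, one_smul, smul_neg]
    rw [toAdd_one]
    abel
  · intro hgl
    refine ⟨inr g.right, ⟨g.right, rfl⟩, ?_⟩
    simp only [MulEquiv.coe_toMonoidHom, MulAut.conj_apply, inv_inv]
    refine SemidirectProduct.ext ?_ ?_
    · apply Multiplicative.toAdd.injective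
      simp only [toAdd_mul, mul_left, mul_right, inv_left, inv_right, left_inl, right_inl,
        left_inr, right_inr, phi_toAdd, elemG, toAdd_inv, toAdd_ofAdd, one_mul, mul_one,
        inv_one, one_smul, smul_neg, hgl]
      rw [toAdd_one]
      abel
    · simp [elemG]

lemma subG_normal {W : AddSubgroup (Fin t → V)} (hW : IsHSub H W) :
    (subG W : Subgroup (SDP V H t)).Normal := by
  constructor
  intro n hn g
  rw [mem_subG] at hn ⊢
  obtain ⟨hn1, hn2⟩ := hn
  constructor
  · simp [hn1]
  · simp only [toAdd_mul, mul_left, mul_right, inv_left, inv_right, phi_toAdd,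
      toAdd_inv, hn1, mul_one, inv_one, smul_add, smul_neg, smul_smul]
    rw [mul_inv_cancel, one_smul]
    have heq : Multiplicative.toAdd g.left + g.right • Multiplicative.toAdd n.left +
        -(Multiplicative.toAdd g.left) = g.right • Multiplicative.toAdd n.left := by abel
    rw [heq]
    exact hW _ _ hn2

lemma mem_subG_sup {W : AddSubgroup (Fin t → V)} (hW : IsHSub H W)
    {X : Subgroup (SDP V H t)} {g : SDP V H t} :
    g ∈ subG W ⊔ X ↔ ∃ a ∈ subG W, ∃ x ∈ X, a * x = g := by
  haveI := subG_normal hW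
  constructor
  · intro hg
    have hset : g ∈ (↑(subG W ⊔ X) : Set (SDP V H t)) := hg
    rw [Subgroup.normal_mul] at hset
    exact hset
  · rintro ⟨a, ha, x, hx, rfl⟩
    exact Subgroup.mul_mem_sup ha hx

lemma mem_cent {u : Fin t → V} {g : SDP V H t} :
    g ∈ Subgroup.centralizer {elemG (H := H) u} ↔ g.right • u = u := by
  rw [Subgroup.mem_centralizer_iff]
  simp only [Set.mem_singleton_iff, forall_eq]
  constructor
  · intro hc
    have hl := congrArg (fun z : SDP V H t => Multiplicative.toAdd z.left) hc
    simp only [mul_left, mul_right, phi_toAdd, toAdd_mul, elemG, left_inl, right_inl,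
      toAdd_ofAdd, one_smul] at hl
    -- hl : u + toAdd g.left = toAdd g.left + g.right • u
    have := hl
    rw [add_comm] at this
    exact (add_left_cancel this).symm
  · intro hu
    refine SemidirectProduct.ext ?_ ?_
    · apply Multiplicative.toAdd.injective
      simp only [mul_left, phi_toAdd, toAdd_mul, elemG, left_inl, right_inl,
        toAdd_ofAdd, one_smul, hu]
      abel
    · simp [elemG]

end PaperAux2


open PaperSDP

/-- Let `G = V^t ⋊ H` with `V` a faithful irreducible `H`-module, and let
`K = W₁X` and `M = W₂H^{v₂}`, where `W₁ ≤ W₂` are `H`-submodules of `V^t` with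
`W₂` maximal, `X ≤ H^{v₁}`, and `v₁, v₂ ∈ V^t`.  Then there exists `u ∈ V^t`
such that `K ∩ M = W₁·C_X(u)`, where `C_X(u)` is the centralizer of `u` in `X`. -/
theorem inter_eq_of_le
    (p : ℕ) (hp : p.Prime) (V H : Type*) [AddCommGroup V] [Group H]
    [DistribMulAction H V] [Finite V] [Finite H] [Group.IsSolvable H]
    (helem : ∀ v : V, p • v = 0)
    (hfaith : IsFaithful H V) (hirr : IsIrreducible H V)
    (t : ℕ) (W₁ W₂ : AddSubgroup (Fin t → V)) (v₁ v₂ : Fin t → V)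
    (X : Subgroup (SDP V H t))
    (hW₁ : IsHSub H W₁) (hW₂ : IsMaxHSub H W₂) (hle : W₁ ≤ W₂)
    (hX : X ≤ HG V H t v₁) :
    ∃ u : Fin t → V,
      (subG W₁ ⊔ X) ⊓ (subG W₂ ⊔ HG V H t v₂) =
        subG W₁ ⊔ (X ⊓ Subgroup.centralizer {elemG (H := H) u}) := by
  classical
  obtain ⟨f, hfe, hfk⟩ := PaperAux.exists_equivariant_hom hirr.2 W₂ hW₂.1 hW₂.2.1 hW₂.2.2
  have hnefin : Nonempty (Fin t) := by
    by_contra hempty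
    apply hW₂.2.1
    ext x
    simp only [AddSubgroup.mem_top, iff_true]
    have hx0 : x = 0 := funext fun i => (hempty ⟨i⟩).elim
    rw [hx0]; exact W₂.zero_mem
  set d : Fin t → V := v₁ - v₂ with hd
  refine ⟨fun _ => f d, ?_⟩
  have key : ∀ h : H, h • d - d ∈ W₂ ↔ h • (fun _ => f d : Fin t → V) = fun _ => f d := by
    intro h
    rw [← hfk, map_sub, hfe, sub_eq_zero]
    constructor
    · intro hfd; funext j; simp only [Pi.smul_apply]; exact hfd
    · intro hfun
      have := congrFun hfun (Classical.arbitrary _)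
      simpa using this
  apply le_antisymm
  · intro g hg
    obtain ⟨hg1, hg2⟩ := Subgroup.mem_inf.mp hg
    rw [PaperAux2.mem_subG_sup hW₁] at hg1
    obtain ⟨a, ha, x, hx, rfl⟩ := hg1
    rw [PaperAux2.mem_subG_sup hW₂.1] at hg2
    obtain ⟨b, hb, m, hm, heq⟩ := hg2
    obtain ⟨ha1, ha2⟩ := PaperAux2.mem_subG.mp ha
    obtain ⟨hb1, hb2⟩ := PaperAux2.mem_subG.mp hb
    have hxH := PaperAux2.mem_HG.mp (hX hx)
    have hmH := PaperAux2.mem_HG.mp hm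
    have hr : m.right = x.right := by
      have h1 := congrArg SemidirectProduct.right heq
      simpa [hb1, ha1] using h1
    have hleq := congrArg (fun z : SDP V H t => Multiplicative.toAdd z.left) heq
    simp only [SemidirectProduct.mul_left, toAdd_mul, PaperAux2.phi_toAdd, ha1, hb1,
      one_smul] at hleq
    rw [hxH, hmH, hr] at hleq
    have h0 : Multiplicative.toAdd a.left + (x.right • v₁ - v₁) -
        (Multiplicative.toAdd b.left + (x.right • v₂ - v₂)) = 0 := by
      rw [hleq, sub_self]
    have e1 : x.right • d - d =
        Multiplicative.toAdd b.left - Multiplicative.toAdd a.left := by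
      rw [hd, smul_sub, ← sub_eq_zero, ← h0]
      abel
    have hWmem : x.right • d - d ∈ W₂ := by
      rw [e1]
      exact W₂.sub_mem hb2 (hle ha2)
    have hcent : x ∈ Subgroup.centralizer {elemG (H := H) (fun _ => f d)} :=
      PaperAux2.mem_cent.mpr ((key x.right).mp hWmem)
    exact Subgroup.mul_mem_sup ha (Subgroup.mem_inf.mpr ⟨hx, hcent⟩)
  · apply sup_le
    · refine le_inf le_sup_left (le_trans ?_ le_sup_left)
      intro g hg
      rw [PaperAux2.mem_subG] at hg ⊢
      exact ⟨hg.1, hle hg.2⟩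
    · refine le_inf (le_trans inf_le_left le_sup_right) ?_
      intro x hx'
      obtain ⟨hx, hc⟩ := Subgroup.mem_inf.mp hx'
      have hxH := PaperAux2.mem_HG.mp (hX hx)
      have hu := PaperAux2.mem_cent.mp hc
      have hWmem : x.right • d - d ∈ W₂ := (key x.right).mpr hu
      rw [PaperAux2.mem_subG_sup hW₂.1]
      refine ⟨SemidirectProduct.inl (Multiplicative.ofAdd (x.right • d - d)), ?_,
        ⟨Multiplicative.ofAdd (x.right • v₂ - v₂), x.right⟩, ?_, ?_⟩
      · rw [PaperAux2.mem_subG]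
        exact ⟨rfl, hWmem⟩
      · exact PaperAux2.mem_HG.mpr rfl
      · refine SemidirectProduct.ext ?_ ?_
        · apply Multiplicative.toAdd.injective
          simp only [SemidirectProduct.mul_left, toAdd_mul, SemidirectProduct.left_inl,
            SemidirectProduct.right_inl, PaperAux2.phi_toAdd, one_smul, toAdd_ofAdd, hxH]
          rw [hd, smul_sub]
          abel
        · exact one_mul x.right
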